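/- If A is a local Prüfer ring, then the set Z(A) of zero-divisors of A is a prime ideal of A. -/

import Mathlib

/-- A Prüfer ring: every finitely generated regular ideal is invertible
(as a submodule of the total ring of fractions). -/
def IsPruferRing (R : Type*) [CommRing R] : Prop :=
  ∀ I : Ideal R, I.FG → (∃ r ∈ I, r ∈ nonZeroDivisors R) →
    ∃ J : Submodule R (FractionRing R),
      Submodule.map (Algebra.linearMap R (FractionRing R)) I * J = 1

theorem stmt6 {A : Type*} [CommRing A] [IsLocalRing A] (h : IsPruferRing A) :
    ∃ p : Ideal A, p.IsPrime ∧ ∀ a : A, a ∈ p ↔ a ∉ nonZeroDivisors A := by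
  classical
  set K := FractionRing A with hK
  let f : A →+* K := algebraMap A K
  have hinj : Function.Injective f := IsFractionRing.injective A K
  -- if f c divides a unit of K, then c is a non-zero-divisor
  have hreg : ∀ (c : A) (k : K), IsUnit (f c * k) → c ∈ nonZeroDivisors A := by
    intro c k hu
    rw [mem_nonZeroDivisors_iff_right]
    intro z hz
    have h0 : f z * (f c * k) = 0 := by
      rw [← mul_assoc, ← map_mul, hz, map_zero, zero_mul]
    have : f z = 0 := by
      have h0' : (hu.unit : K) * f z = 0 := by rw [hu.unit_spec, mul_comm]; exact h0
      exact (Units.mul_right_eq_zero hu.unit).mp h0'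
    have : f z = f 0 := by simpa using this
    exact hinj this
  have hadd : ∀ a b : A, a ∉ nonZeroDivisors A → b ∉ nonZeroDivisors A →
      a + b ∉ nonZeroDivisors A := by
    intro a b ha hb hab
    obtain ⟨J, hJ⟩ := h (Ideal.span {a, b}) ⟨{a, b}, by simp⟩
      ⟨a + b, Ideal.add_mem _ (Ideal.subset_span (by simp))
        (Ideal.subset_span (by simp)), hab⟩
    -- factor out generator from elements of map f (span {c}) * J
    have hfac : ∀ (c : A) (m : K),
        m ∈ Submodule.map (Algebra.linearMap A K) (Ideal.span {c}) * J →
        ∃ k : K, m = f c * k := by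
      intro c m hm
      refine Submodule.mul_induction_on hm ?_ ?_
      · rintro x hx y hy
        obtain ⟨x', hx', rfl⟩ := hx
        obtain ⟨r, rfl⟩ := Ideal.mem_span_singleton'.mp hx'
        exact ⟨f r * y, by simp only [Algebra.linearMap_apply, map_mul]; ring⟩
      · rintro x y ⟨k1, rfl⟩ ⟨k2, rfl⟩
        exact ⟨k1 + k2, (mul_add _ _ _).symm⟩
    have hsplit : Ideal.span ({a, b} : Set A) = Ideal.span {a} ⊔ Ideal.span {b} := by
      rw [Ideal.span_insert]
    have hle : ∀ c : A, c ∈ ({a, b} : Set A) →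
        Submodule.map (Algebra.linearMap A K) (Ideal.span {c}) * J ≤ 1 := by
      intro c hc
      rw [← hJ]
      exact mul_le_mul' (Submodule.map_mono
        ((Ideal.span_singleton_le_iff_mem _).mpr (Ideal.subset_span hc))) le_rfl
    have hmem1 : (1 : K) ∈
        Submodule.map (Algebra.linearMap A K) (Ideal.span {a}) * J ⊔
        Submodule.map (Algebra.linearMap A K) (Ideal.span {b}) * J := by
      rw [← Submodule.sup_mul, ← Submodule.map_sup, ← hsplit, hJ]
      exact Submodule.one_le.mp le_rfl
    obtain ⟨m, hm, n, hn, hmn⟩ := Submodule.mem_sup.mp hmem1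
    obtain ⟨x, hx⟩ := Submodule.mem_one.mp (hle a (by simp) hm)
    obtain ⟨y, hy⟩ := Submodule.mem_one.mp (hle b (by simp) hn)
    have hxy : x + y = 1 := by
      apply hinj
      simp only [map_add, map_one, f]
      rw [hx, hy, hmn]
    rcases IsLocalRing.isUnit_or_isUnit_of_add_one hxy with hu | hu
    · obtain ⟨k, hk⟩ := hfac a m hm
      have hm' : IsUnit m := hx ▸ hu.map (algebraMap A K)
      rw [hk] at hm'
      exact ha (hreg a k hm')
    · obtain ⟨k, hk⟩ := hfac b n hn
      have hn' : IsUnit n := hy ▸ hu.map (algebraMap A K)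
      rw [hk] at hn'
      exact hb (hreg b k hn')
  refine ⟨{ carrier := {x : A | x ∉ nonZeroDivisors A}
            zero_mem' := by
              simp only [Set.mem_setOf_eq]
              exact fun hz => one_ne_zero ((mem_nonZeroDivisors_iff_right.mp hz) 1 (by simp))
            add_mem' := fun {a b} ha hb => hadd a b ha hb
            smul_mem' := by
              intro r x hx hrx
              apply hx
              rw [mem_nonZeroDivisors_iff_right]
              intro z hz
              have : z * (r • x) = 0 := by
                rw [smul_eq_mul]; rw [← mul_assoc, mul_comm z r, mul_assoc, hz, mul_zero]
              exact (mem_nonZeroDivisors_iff_right.mp hrx) z this }, ?_, fun a => Iff.rfl⟩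
  constructor
  · rw [Ideal.ne_top_iff_one]
    intro h1
    exact h1 (one_mem (nonZeroDivisors A))
  · intro x y hxy
    by_contra hc
    push_neg at hc
    obtain ⟨hx, hy⟩ := hc
    simp only [Submodule.mem_mk, AddSubmonoid.mem_mk, AddSubsemigroup.mem_mk,
      Set.mem_setOf_eq, not_not] at hx hy hxy
    exact hxy (mul_mem hx hy)
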